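/- Let k be an infinite field, n ≥ 1, and f ∈ k[X₁,…,X_n] a polynomial, and fix h ∈ kⁿ. Then f has total degree ≤ n₀ if and only if for every X ∈ kⁿ, the univariate polynomial t ↦ f(h + tX) in k[t] has degree ≤ n₀. -/

import Mathlib

open Polynomial

private lemma coeff_prod_aux {k : Type*} [CommSemiring k] {ι : Type*} [DecidableEq ι]
    (s : Finset ι) (q : ι → Polynomial k) (d : ι → ℕ)
    (hq : ∀ i ∈ s, (q i).natDegree ≤ d i) :
    (∏ i ∈ s, q i).coeff (∑ i ∈ s, d i) = ∏ i ∈ s, (q i).coeff (d i) := by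
  induction s using Finset.induction with
  | empty => simp
  | @insert a s ha ih =>
    rw [Finset.prod_insert ha, Finset.sum_insert ha, Finset.prod_insert ha,
      Polynomial.coeff_mul_add_eq_of_natDegree_le (hq a (Finset.mem_insert_self a s))
        ((Polynomial.natDegree_prod_le _ _).trans
          (Finset.sum_le_sum fun i hi => hq i (Finset.mem_insert_of_mem hi))),
      ih fun i hi => hq i (Finset.mem_insert_of_mem hi)]

private lemma deg_sum_aux {n : ℕ} (s : Fin n →₀ ℕ) :
    Finsupp.degree s = ∑ i : Fin n, s i :=
  Finset.sum_subset (Finset.subset_univ _)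
    (fun i _ hi => Finsupp.notMem_support_iff.mp hi)

private lemma natDegree_phi_le {k : Type*} [CommSemiring k] (a b : k) :
    (Polynomial.C a + Polynomial.X * Polynomial.C b).natDegree ≤ 1 := by
  compute_degree

private lemma coeff_one_phi {k : Type*} [CommSemiring k] (a b : k) :
    (Polynomial.C a + Polynomial.X * Polynomial.C b).coeff 1 = b := by
  simp [Polynomial.coeff_C]

private lemma coeff_top_aux {k : Type*} [CommSemiring k] {n : ℕ}
    (f : MvPolynomial (Fin n) k) (h x : Fin n → k) :
    (MvPolynomial.aeval
        (fun i => Polynomial.C (h i) + Polynomial.X * Polynomial.C (x i)) f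
      : Polynomial k).coeff f.totalDegree
      = MvPolynomial.eval x (MvPolynomial.homogeneousComponent f.totalDegree f) := by
  rw [MvPolynomial.aeval_def, MvPolynomial.eval₂_eq', Polynomial.finset_sum_coeff,
    MvPolynomial.homogeneousComponent_apply, map_sum, Finset.sum_filter]
  refine Finset.sum_congr rfl fun s hs => ?_
  have hdeg : ∀ i : Fin n,
      ((Polynomial.C (h i) + Polynomial.X * Polynomial.C (x i)) ^ s i).natDegree ≤ s i :=
    fun i => by simpa using Polynomial.natDegree_pow_le_of_le (s i) (natDegree_phi_le (h i) (x i))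
  have hsum : ∑ i : Fin n, s i ≤ f.totalDegree := by
    rw [← deg_sum_aux]
    simpa [Finsupp.degree_apply, MvPolynomial.totalDegree, Finsupp.sum] using
      MvPolynomial.le_totalDegree (R := k) hs
  by_cases hc : Finsupp.degree s = f.totalDegree
  · rw [if_pos hc]
    have h1 : ∑ i : Fin n, s i = f.totalDegree := by rw [← deg_sum_aux, hc]
    rw [MvPolynomial.eval_monomial, ← h1, Polynomial.algebraMap_eq,
      Polynomial.coeff_C_mul, coeff_prod_aux _ _ _ fun i _ => hdeg i]
    congr 1
    · have key : ∀ i : Fin n,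
          ((Polynomial.C (h i) + Polynomial.X * Polynomial.C (x i)) ^ s i).coeff (s i)
            = x i ^ s i := fun i => by
        have := Polynomial.coeff_pow_of_natDegree_le (m := s i)
          (natDegree_phi_le (h i) (x i))
        simpa [coeff_one_phi] using this
      rw [Finset.prod_congr rfl fun i _ => key i, Finsupp.prod_pow]
  · rw [if_neg hc]
    have hlt : ∑ i : Fin n, s i < f.totalDegree :=
      lt_of_le_of_ne hsum (by rwa [← deg_sum_aux])
    rw [Polynomial.algebraMap_eq, Polynomial.coeff_C_mul,
      Polynomial.coeff_eq_zero_of_natDegree_lt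
        (lt_of_le_of_lt ((Polynomial.natDegree_prod_le _ _).trans
          (Finset.sum_le_sum fun i _ => hdeg i)) hlt), mul_zero]

/-- over an infinite field `k`, a polynomial `f ∈ k[X₁,…,X_n]` has total
degree `≤ n₀` iff for every direction `X ∈ kⁿ` the univariate polynomial
`t ↦ f(h + tX)` has degree `≤ n₀` (for a fixed base point `h ∈ kⁿ`). -/
theorem stmt_5 (k : Type*) [Field k] [Infinite k] (n : ℕ) (hn : 1 ≤ n)
    (f : MvPolynomial (Fin n) k) (h : Fin n → k) (n₀ : ℕ) :
    f.totalDegree ≤ n₀ ↔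
      ∀ X : Fin n → k,
        (MvPolynomial.aeval
            (fun i => Polynomial.C (h i) + Polynomial.X * Polynomial.C (X i)) f
          : Polynomial k).degree ≤ (n₀ : ℕ) := by
  constructor
  · intro hd X
    rw [← Polynomial.natDegree_le_iff_degree_le]
    rw [MvPolynomial.aeval_def, MvPolynomial.eval₂_eq']
    refine Polynomial.natDegree_sum_le_of_forall_le _ _ fun s hs => ?_
    refine Polynomial.natDegree_mul_le.trans ?_
    rw [Polynomial.algebraMap_eq, Polynomial.natDegree_C, zero_add]
    refine (Polynomial.natDegree_prod_le _ _).trans ?_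
    refine le_trans (Finset.sum_le_sum fun i _ => by
      simpa using Polynomial.natDegree_pow_le_of_le (s i) (natDegree_phi_le (h i) (X i))) ?_
    refine le_trans ?_ hd
    rw [← deg_sum_aux]
    simpa [Finsupp.degree_apply, MvPolynomial.totalDegree, Finsupp.sum] using
      MvPolynomial.le_totalDegree (R := k) hs
  · intro hX
    by_contra hc
    push_neg at hc
    have hf : f ≠ 0 := by
      rintro rfl
      simp [MvPolynomial.totalDegree_zero] at hc
    have hcomp : MvPolynomial.homogeneousComponent f.totalDegree f ≠ 0 := by
      obtain ⟨d, hd, hdd⟩ := Finset.exists_mem_eq_sup f.support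
        (MvPolynomial.support_nonempty.mpr hf) (fun s => s.sum fun _ e => e)
      intro h0
      have := MvPolynomial.coeff_homogeneousComponent (σ := Fin n) (R := k)
        f.totalDegree f d
      rw [h0, if_pos] at this
      · exact (MvPolynomial.mem_support_iff.mp hd) this.symm
      · rw [MvPolynomial.totalDegree, hdd]
        simp [Finsupp.degree_apply, Finsupp.sum]
    obtain ⟨x, hx⟩ : ∃ x, MvPolynomial.eval x
        (MvPolynomial.homogeneousComponent f.totalDegree f) ≠ 0 := by
      by_contra h'
      push_neg at h'
      exact hcomp (MvPolynomial.funext fun x => by simp [h' x])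
    have hco :
        (MvPolynomial.aeval
            (fun i => Polynomial.C (h i) + Polynomial.X * Polynomial.C (x i)) f
          : Polynomial k).coeff f.totalDegree ≠ 0 := by
      rw [coeff_top_aux]; exact hx
    have hle := (Polynomial.le_degree_of_ne_zero hco).trans (hX x)
    exact absurd hle (by exact_mod_cast not_le.mpr hc)
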